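/- Let w be an (m,M)-regular distance generating function with respect to (Z, ‖·‖). Then for every l ≥ 1 and points u_0, u_1, ..., u_l ∈ Z: (dw)_{u_0}(u_l) ≤ (l M / m) · Σ_{i=1}^{l} min{(dw)_{u_{i-1}}(u_i), (dw)_{u_i}(u_{i-1})}. -/

import Mathlib

lemma seminorm_telescope {Z : Type*} [NormedAddCommGroup Z] [InnerProductSpace ℝ Z]
    (p : Seminorm ℝ Z) (u : ℕ → Z) (l : ℕ) :
    p (u 0 - u l) ≤ ∑ i ∈ Finset.range l, p (u i - u (i + 1)) := by
  induction l with
  | zero => simp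
  | succ n ih =>
    rw [Finset.sum_range_succ]
    have he : u 0 - u (n + 1) = (u 0 - u n) + (u n - u (n + 1)) := by abel
    rw [he]
    exact le_trans (map_add_le_add p _ _) (by linarith)

/-- Let `w` (with Bregman distance `dw`) be an `(m,M)`-regular distance generating
function with respect to `(Zs, p)`, so that
`(m/2)·p(z-z')² ≤ (dw)_z(z') ≤ (M/2)·p(z-z')²` on `Zs`. Then for every `l ≥ 1` and
points `u_0, …, u_l ∈ Zs`:
`(dw)_{u_0}(u_l) ≤ (lM/m) · Σ_{i=1}^{l} min{(dw)_{u_{i-1}}(u_i), (dw)_{u_i}(u_{i-1})}`. -/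
theorem bregman_chain_bound {Z : Type*} [NormedAddCommGroup Z] [InnerProductSpace ℝ Z]
    [FiniteDimensional ℝ Z]
    (Zs : Set Z) (hZs : Convex ℝ Zs) (p : Seminorm ℝ Z)
    (w : Z → ℝ) (g : Z → Z) (m M : ℝ) (hm : 0 < m) (hM : 0 < M)
    (dw : Z → Z → ℝ)
    (hdw : ∀ z z' : Z, dw z z' = w z' - w z - (inner ℝ (g z) (z' - z) : ℝ))
    (hstrong : ∀ z ∈ Zs, ∀ z' ∈ Zs, m / 2 * (p (z - z'))^2 ≤ dw z z')
    (hsmooth : ∀ z ∈ Zs, ∀ z' ∈ Zs, dw z z' ≤ M / 2 * (p (z - z'))^2)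
    (l : ℕ) (hl : 1 ≤ l) (u : ℕ → Z) (hu : ∀ i ≤ l, u i ∈ Zs) :
    dw (u 0) (u l)
      ≤ (l : ℝ) * M / m *
        ∑ i ∈ Finset.range l, min (dw (u i) (u (i + 1))) (dw (u (i + 1)) (u i)) := by
  have hmin : ∀ i ∈ Finset.range l,
      (p (u i - u (i + 1)))^2 ≤ 2 / m * min (dw (u i) (u (i + 1))) (dw (u (i + 1)) (u i)) := by
    intro i hi
    rw [Finset.mem_range] at hi
    have h1 := hstrong (u i) (hu i (by omega)) (u (i + 1)) (hu (i + 1) (by omega))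
    have h2 := hstrong (u (i + 1)) (hu (i + 1) (by omega)) (u i) (hu i (by omega))
    have hsym : p (u (i + 1) - u i) = p (u i - u (i + 1)) := by
      rw [← map_neg_eq_map p]; congr 1; abel
    rw [hsym] at h2
    have hle : m / 2 * (p (u i - u (i + 1)))^2
        ≤ min (dw (u i) (u (i + 1))) (dw (u (i + 1)) (u i)) := le_min h1 h2
    rw [div_mul_eq_mul_div, le_div_iff₀ hm]
    nlinarith
  have hsum : (p (u 0 - u l))^2 ≤ (l : ℝ) * ∑ i ∈ Finset.range l, (p (u i - u (i + 1)))^2 := by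
    have ht := seminorm_telescope p u l
    have hc : (∑ i ∈ Finset.range l, p (u i - u (i + 1)))^2
        ≤ (l : ℝ) * ∑ i ∈ Finset.range l, (p (u i - u (i + 1)))^2 := by
      have := sq_sum_le_card_mul_sum_sq (s := Finset.range l)
        (f := fun i => p (u i - u (i + 1)))
      simpa using this
    have hp0 : 0 ≤ p (u 0 - u l) := apply_nonneg p _
    nlinarith [Finset.sum_nonneg (s := Finset.range l) (fun i _ => apply_nonneg p (u i - u (i + 1)))]
  have h0 := hsmooth (u 0) (hu 0 (by omega)) (u l) (hu l le_rfl)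
  have hsum2 : ∑ i ∈ Finset.range l, (p (u i - u (i + 1)))^2
      ≤ ∑ i ∈ Finset.range l, 2 / m * min (dw (u i) (u (i + 1))) (dw (u (i + 1)) (u i)) :=
    Finset.sum_le_sum hmin
  rw [← Finset.mul_sum] at hsum2
  have hl1 : (1 : ℝ) ≤ l := by exact_mod_cast hl
  calc dw (u 0) (u l) ≤ M / 2 * (p (u 0 - u l))^2 := h0
    _ ≤ M / 2 * ((l : ℝ) * ∑ i ∈ Finset.range l, (p (u i - u (i + 1)))^2) :=
        mul_le_mul_of_nonneg_left hsum (by positivity)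
    _ ≤ M / 2 * ((l : ℝ) * (2 / m * ∑ i ∈ Finset.range l,
        min (dw (u i) (u (i + 1))) (dw (u (i + 1)) (u i)))) := by
        gcongr
    _ = (l : ℝ) * M / m * ∑ i ∈ Finset.range l,
        min (dw (u i) (u (i + 1))) (dw (u (i + 1)) (u i)) := by
        field_simp
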